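/- Let C be a 2×2 row-stochastic matrix, Y the tally matrix on Bool^N counting trues, and Y† any left inverse of Y that is row-stochastic and supported on representatives of tally-classes. Then Y · Y† · C^{⊗N} · Y = C^{⊗N} · Y. -/

import Mathlib

def kronPow {X Y : Type*} (A : Matrix X Y ℝ) (N : ℕ) :
    Matrix (Fin N → X) (Fin N → Y) ℝ :=
  Matrix.of fun v u => ∏ i, A (v i) (u i)

def countTrue {N : ℕ} (s : Fin N → Bool) : ℕ :=
  (Finset.univ.filter fun i => s i = true).card

noncomputable def tally (N : ℕ) : Matrix (Fin N → Bool) (Fin (N + 1)) ℝ :=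
  Matrix.of fun s n => if countTrue s = (n : ℕ) then 1 else 0

def RowStochastic {X Y : Type*} [Fintype Y] (M : Matrix X Y ℝ) : Prop :=
  (∀ x y, 0 ≤ M x y) ∧ ∀ x, ∑ y, M x y = 1

lemma exists_perm {N : ℕ} {s t : Fin N → Bool} (h : countTrue s = countTrue t) :
    ∃ σ : Equiv.Perm (Fin N), s = t ∘ σ := by
  classical
  set A := Finset.univ.filter (fun i => s i = true) with hA
  set B := Finset.univ.filter (fun i => t i = true) with hB
  have hcard : A.card = B.card := h
  have hcardc : Aᶜ.card = Bᶜ.card := by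
    simp [Finset.card_compl, hcard]
  let e : {x // x ∈ A} ≃ {x // x ∈ B} := Finset.equivOfCardEq hcard
  let e' : {x : Fin N // ¬ x ∈ A} ≃ {x : Fin N // ¬ x ∈ B} :=
    ((Equiv.subtypeEquivRight (fun x => (Finset.mem_compl).symm)).trans
      (Finset.equivOfCardEq hcardc)).trans
      (Equiv.subtypeEquivRight (fun x => Finset.mem_compl))
  let σ : Equiv.Perm (Fin N) :=
    ((Equiv.sumCompl (· ∈ A)).symm.trans (e.sumCongr e')).trans (Equiv.sumCompl (· ∈ B))
  have hmem : ∀ i, σ i ∈ B ↔ i ∈ A := by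
    intro i
    by_cases hi : i ∈ A
    · simp [σ, Equiv.sumCompl_symm_apply_of_pos (p := (· ∈ A)) hi, hi]
    · simp [σ, Equiv.sumCompl_symm_apply_of_neg (p := (· ∈ A)) hi, hi]
      exact (e' ⟨i, hi⟩).2
  refine ⟨σ, funext fun i => ?_⟩
  have := hmem i
  simp only [hA, hB, Finset.mem_filter, Finset.mem_univ, true_and] at this
  by_cases hi : s i = true
  · simp [Function.comp, hi, this.2 hi]
  · simp only [Function.comp_apply]
    rw [Bool.not_eq_true] at hi
    rw [hi]
    cases hc : t (σ i)
    · rfl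
    · rw [this.1 hc] at hi; simp at hi

lemma countTrue_comp {N : ℕ} (u : Fin N → Bool) (π : Equiv.Perm (Fin N)) :
    countTrue (u ∘ π) = countTrue u := by
  unfold countTrue
  exact Finset.card_bij (fun i _ => π i) (by simp)
    (fun a _ b _ h => π.injective h)
    (fun b hb => ⟨π.symm b, by simpa using hb, by simp⟩)

lemma KY_row_eq {N : ℕ} (C : Matrix Bool Bool ℝ) {s t : Fin N → Bool}
    (h : countTrue s = countTrue t) (n : Fin (N + 1)) :
    (kronPow C N * tally N) s n = (kronPow C N * tally N) t n := by
  obtain ⟨σ, hst⟩ := exists_perm h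
  rw [Matrix.mul_apply, Matrix.mul_apply]
  refine Fintype.sum_equiv (Equiv.arrowCongr σ (Equiv.refl Bool)) _ _ (fun u => ?_)
  have h1 : kronPow C N s u = kronPow C N t (fun i => u (σ.symm i)) := by
    simp only [kronPow, Matrix.of_apply, hst, Function.comp_apply]
    rw [← Equiv.prod_comp σ (fun i => C (t i) (u (σ.symm i)))]
    simp
  have h2 : countTrue (fun i => u (σ.symm i)) = countTrue u := by
    exact countTrue_comp u σ.symm
  have harr : (Equiv.arrowCongr σ (Equiv.refl Bool)) u = fun i => u (σ.symm i) := by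
    funext i; simp [Equiv.arrowCongr]
  rw [harr, ← h1]
  simp only [tally, Matrix.of_apply, h2]

/-- Tally absorption: for a 2×2 channel `C` and any row-stochastic left inverse
`Y†` of the tally `Y` supported on tally-classes, `Y · Y† · C^{⊗N} · Y = C^{⊗N} · Y`. -/
theorem tally_absorption {N : ℕ}
    (C : Matrix Bool Bool ℝ) (hC : RowStochastic C)
    (Yd : Matrix (Fin (N + 1)) (Fin N → Bool) ℝ)
    (hYdY : Yd * tally N = 1)
    (hYd : RowStochastic Yd)
    (hsupp : ∀ (n : Fin (N + 1)) (s : Fin N → Bool), Yd n s ≠ 0 → countTrue s = (n : ℕ)) :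
    tally N * Yd * kronPow C N * tally N = kronPow C N * tally N := by
  ext s n
  have hmlt : countTrue s < N + 1 := by
    have : countTrue s ≤ N := by
      simpa [countTrue] using Finset.card_filter_le Finset.univ (fun i => s i = true)
    omega
  set m : Fin (N + 1) := ⟨countTrue s, hmlt⟩ with hm
  have hTY : ∀ u, (tally N * Yd) s u = Yd m u := by
    intro u
    rw [Matrix.mul_apply]
    rw [Finset.sum_eq_single m]
    · simp [tally, hm]
    · intro k _ hk
      have : countTrue s ≠ (k : ℕ) := fun hc => hk (Fin.ext (by simp [hm, ← hc]))
      simp [tally, this]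
    · simp
  have assoc : tally N * Yd * kronPow C N * tally N
      = (tally N * Yd) * (kronPow C N * tally N) :=
    Matrix.mul_assoc (tally N * Yd) (kronPow C N) (tally N)
  rw [assoc, Matrix.mul_apply]
  have hterm : ∀ u : Fin N → Bool,
      (tally N * Yd) s u * (kronPow C N * tally N) u n
        = Yd m u * (kronPow C N * tally N) s n := by
    intro u
    rw [hTY u]
    by_cases h0 : Yd m u = 0
    · simp [h0]
    · rw [KY_row_eq C (show countTrue s = countTrue u from (hsupp m u h0).symm) n]
  rw [Finset.sum_congr rfl (fun u _ => hterm u), ← Finset.sum_mul, hYd.2 m, one_mul]
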